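/- Let i and n be odd natural numbers with i < n. Then Σ_{j=0}^{n} (−1)^j · (cos(jπ/n))^i = 1. -/

import Mathlib

theorem stmt18 (i n : ℕ) (hi : Odd i) (hn : Odd n) (hlt : i < n) :
    ∑ j ∈ Finset.range (n + 1),
      (-1 : ℝ) ^ j * (Real.cos (j * Real.pi / n)) ^ i = 1 := by
  obtain ⟨d, hd⟩ : ∃ d, n = i + d := ⟨n - i, by omega⟩
  subst hd
  set n := i + d with hn'
  have hn0 : n ≠ 0 := by omega
  have hnC : (n:ℂ) ≠ 0 := Nat.cast_ne_zero.mpr hn0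
  have hpi : (Real.pi:ℂ) ≠ 0 := by exact_mod_cast Real.pi_ne_zero
  have hd_even : Even d := by have := Nat.Odd.sub_odd hn hi; simpa [hn'] using this
  set z : ℂ := Complex.exp (Real.pi / n * Complex.I) with hzdef
  have hz0 : z ≠ 0 := Complex.exp_ne_zero _
  have hzpow : ∀ m : ℕ, z ^ m = Complex.exp ((m : ℂ) * (Real.pi / n * Complex.I)) := fun m => by
    rw [hzdef, ← Complex.exp_nat_mul]
  have hzn : z ^ n = -1 := by
    rw [hzpow]
    have h : (n:ℂ) * ((Real.pi:ℂ) / n * Complex.I) = Real.pi * Complex.I := by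
      field_simp
    rw [h, Complex.exp_pi_mul_I]
  -- geometric sums are all 1
  have hgeom : ∀ t ∈ Finset.range (i+1),
      ∑ j ∈ Finset.range (n+1), (z ^ (d + 2*t)) ^ j = 1 := by
    intro t ht
    simp only [Finset.mem_range] at ht
    set m := d + 2*t with hm
    have hwn : (z ^ m) ^ n = 1 := by
      rw [← pow_mul, mul_comm, pow_mul, hzn]
      exact (hd_even.add (even_two_mul t)).neg_one_pow
    have hw1 : z ^ m ≠ 1 := by
      intro h
      rw [hzpow, Complex.exp_eq_one_iff] at h
      obtain ⟨k, hk⟩ := h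
      field_simp at hk
      have hk2' : (m:ℂ) * (Real.pi * Complex.I) = (2*k*n) * (Real.pi * Complex.I) := by
        linear_combination (Real.pi * Complex.I : ℂ) * hk
      have hk2 : (m:ℂ) = 2*k*n :=
        mul_right_cancel₀ (mul_ne_zero hpi Complex.I_ne_zero) hk2'
      have hk3 : (m:ℤ) = 2*k*n := by exact_mod_cast hk2
      have hd1 : (1:ℤ) ≤ m := by exact_mod_cast Nat.one_le_iff_ne_zero.mpr (by omega : m ≠ 0)
      have hd2 : (m:ℤ) < 2*n := by exact_mod_cast (by omega : m < 2*n)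
      have hnpos : (0:ℤ) < n := by exact_mod_cast Nat.pos_of_ne_zero hn0
      have hkpos : 0 < k := by
        by_contra hc; push_neg at hc
        have : 2*k*(n:ℤ) ≤ 0 := by
          have := mul_nonpos_of_nonpos_of_nonneg (by linarith : 2*k ≤ (0:ℤ)) (le_of_lt hnpos)
          linarith
        omega
      have : 2*(n:ℤ) ≤ 2*k*n := by nlinarith
      omega
    rw [geom_sum_eq hw1, pow_succ, hwn, one_mul, div_self (sub_ne_zero.mpr hw1)]
  -- per-term expansion
  have hterm : ∀ j ∈ Finset.range (n+1),
      (-1:ℂ)^j * (Complex.cos ((j:ℂ) * Real.pi / n))^i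
        = ∑ t ∈ Finset.range (i+1), ((i.choose t : ℂ) / 2^i) * (z ^ (d + 2*t)) ^ j := by
    intro j _
    have hw0 : z ^ j ≠ 0 := pow_ne_zero _ hz0
    have hcos : Complex.cos ((j:ℂ) * Real.pi / n) = (z^j + (z^j)⁻¹) / 2 := by
      have h1 : Complex.cos ((j:ℂ) * Real.pi / n)
          = (Complex.exp ((j:ℂ) * Real.pi / n * Complex.I)
            + Complex.exp (-((j:ℂ) * Real.pi / n) * Complex.I)) / 2 := rfl
      rw [h1, hzpow, ← Complex.exp_neg]
      ring_nf
    rw [hcos, ← hzn]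
    have hexp : (z^j + (z^j)⁻¹)^i * (z^j)^i = ((z^j)^2 + 1)^i := by
      rw [← mul_pow]; congr 1
      rw [add_mul, inv_mul_cancel₀ hw0]; ring
    have hbin : ((z^j)^2 + 1)^i
        = ∑ t ∈ Finset.range (i+1), ((z^j)^2)^t * (i.choose t : ℂ) := by
      rw [add_pow]; simp
    have h2 : ((2:ℂ)^i * (z^j)^i) ≠ 0 :=
      mul_ne_zero (pow_ne_zero _ two_ne_zero) (pow_ne_zero _ hw0)
    apply mul_right_cancel₀ h2
    have hLHS : (z^n)^j * ((z^j + (z^j)⁻¹)/2)^i * ((2:ℂ)^i * (z^j)^i)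
        = (z^n)^j * ((z^j)^2+1)^i := by
      rw [div_pow, ← hexp]
      have h2i : (2:ℂ)^i ≠ 0 := pow_ne_zero _ two_ne_zero
      have hc : (z^j + (z^j)⁻¹)^i / 2^i * 2^i = (z^j + (z^j)⁻¹)^i := div_mul_cancel₀ _ h2i
      linear_combination ((z^n)^j * (z^j)^i) * hc
    rw [hLHS, hbin, Finset.mul_sum, Finset.sum_mul]
    apply Finset.sum_congr rfl
    intro t _
    have hpoweq : (z^n)^j * ((z^j)^2)^t = (z^(d+2*t))^j * (z^j)^i := by
      simp only [← pow_mul]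
      rw [← pow_add, ← pow_add]
      congr 1
      rw [hn']; ring
    calc (z^n)^j * (((z^j)^2)^t * (i.choose t : ℂ))
        = ((z^n)^j * ((z^j)^2)^t) * (i.choose t : ℂ) := by ring
      _ = ((z^(d+2*t))^j * (z^j)^i) * (i.choose t : ℂ) := by rw [hpoweq]
      _ = (i.choose t : ℂ)/2^i * (z^(d+2*t))^j * ((2:ℂ)^i * (z^j)^i) := by
          have h2i : (2:ℂ)^i ≠ 0 := pow_ne_zero _ two_ne_zero
          have hc : (i.choose t : ℂ)/2^i * 2^i = (i.choose t : ℂ) := div_mul_cancel₀ _ h2i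
          linear_combination (-((z^(d+2*t))^j * (z^j)^i)) * hc
  -- put it together over ℂ
  have keyC : ∑ j ∈ Finset.range (n+1),
      (-1:ℂ)^j * (Complex.cos ((j:ℂ) * Real.pi / n))^i = 1 := by
    rw [Finset.sum_congr rfl hterm, Finset.sum_comm]
    have hinner : ∀ t ∈ Finset.range (i+1),
        ∑ j ∈ Finset.range (n+1), ((i.choose t:ℂ)/2^i) * (z^(d+2*t))^j
          = (i.choose t:ℂ)/2^i := by
      intro t ht
      rw [← Finset.mul_sum, hgeom t ht, mul_one]
    rw [Finset.sum_congr rfl hinner, ← Finset.sum_div]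
    have hch : ∑ t ∈ Finset.range (i+1), (i.choose t : ℂ) = 2^i := by
      exact_mod_cast Nat.sum_range_choose i
    rw [hch, div_self (pow_ne_zero _ two_ne_zero)]
  have hfin : ((∑ j ∈ Finset.range (n+1),
      (-1:ℝ)^j * (Real.cos (j * Real.pi / n))^i : ℝ) : ℂ) = 1 := by
    push_cast [Complex.ofReal_cos]
    exact keyC
  exact_mod_cast hfin
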